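/- Let b > 0 and define g(x) = (1-x)·ln(1 + bx/(1-x)) for 0 < x < 1. Then g is strictly concave on (0,1), with second derivative g''(x) = b^2/((x-1)·((b-1)x+1)^2) < 0. -/

import Mathlib

open Real Set

/-- For `b > 0`, `g x = (1-x) * log (1 + b*x/(1-x))` is strictly concave on `(0,1)`,
with second derivative `g'' x = b^2 / ((x-1)*((b-1)*x+1)^2) < 0`. -/
theorem stmt_4 (b : ℝ) (hb : 0 < b) :
    StrictConcaveOn ℝ (Set.Ioo (0:ℝ) 1)
      (fun x => (1 - x) * Real.log (1 + b * x / (1 - x))) ∧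
    ∀ x ∈ Set.Ioo (0:ℝ) 1,
      deriv (deriv (fun x => (1 - x) * Real.log (1 + b * x / (1 - x)))) x =
        b ^ 2 / ((x - 1) * ((b - 1) * x + 1) ^ 2) ∧
      b ^ 2 / ((x - 1) * ((b - 1) * x + 1) ^ 2) < 0 := by
  set g : ℝ → ℝ := fun x => (1 - x) * Real.log (1 + b * x / (1 - x)) with hg
  set φ : ℝ → ℝ := fun x =>
    -(Real.log ((b-1)*x+1) - Real.log (1-x)) + ((b-1)*(1-x)/((b-1)*x+1) + 1) with hφ
  have hu : ∀ x ∈ Ioo (0:ℝ) 1, 0 < (b-1)*x+1 := by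
    intro x hx
    nlinarith [hx.1, hx.2]
  have hA : ∀ x ∈ Ioo (0:ℝ) 1, HasDerivAt g (φ x) x := by
    intro x hx
    have h1x : (0:ℝ) < 1 - x := by linarith [hx.2]
    have hux := hu x hx
    have d1 : HasDerivAt (fun y : ℝ => 1 - y) (-1) x := by
      simpa using (hasDerivAt_id' x).const_sub (1:ℝ)
    have d2 : HasDerivAt (fun y : ℝ => Real.log ((b-1)*y+1)) ((b-1)/((b-1)*x+1)) x := by
      have h5 : HasDerivAt (fun y : ℝ => (b-1)*y+1) (b-1) x := by
        simpa using ((hasDerivAt_id x).const_mul (b-1)).add_const 1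
      simpa using h5.log hux.ne'
    have d3 : HasDerivAt (fun y : ℝ => Real.log (1-y)) (-1/(1-x)) x := by
      simpa using d1.log h1x.ne'
    have hh : HasDerivAt (fun y => (1-y) * (Real.log ((b-1)*y+1) - Real.log (1-y))) (φ x) x := by
      refine (d1.mul (d2.sub d3)).congr_deriv ?_
      rw [hφ, Pi.sub_apply]
      field_simp
      ring
    apply hh.congr_of_eventuallyEq
    filter_upwards [isOpen_Ioo.mem_nhds hx] with y hy
    have h1y : (0:ℝ) < 1 - y := by linarith [hy.2]
    have huy := hu y hy
    have key : 1 + b * y / (1 - y) = ((b-1)*y+1)/(1-y) := by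
      field_simp; ring
    rw [hg]
    simp only [key, Real.log_div huy.ne' h1y.ne']
  have hB : ∀ x ∈ Ioo (0:ℝ) 1, deriv g x = φ x := fun x hx => (hA x hx).deriv
  have hC : ∀ x ∈ Ioo (0:ℝ) 1,
      HasDerivAt (deriv g) (b^2/((x-1)*((b-1)*x+1)^2)) x := by
    intro x hx
    have h1x : (0:ℝ) < 1 - x := by linarith [hx.2]
    have hux := hu x hx
    have d1 : HasDerivAt (fun y : ℝ => 1 - y) (-1) x := by
      simpa using (hasDerivAt_id' x).const_sub (1:ℝ)
    have d5 : HasDerivAt (fun y : ℝ => (b-1)*y+1) (b-1) x := by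
      simpa using ((hasDerivAt_id x).const_mul (b-1)).add_const 1
    have d2 : HasDerivAt (fun y : ℝ => Real.log ((b-1)*y+1)) ((b-1)/((b-1)*x+1)) x := by
      simpa using d5.log hux.ne'
    have d3 : HasDerivAt (fun y : ℝ => Real.log (1-y)) (-1/(1-x)) x := by
      simpa using d1.log h1x.ne'
    have d4 : HasDerivAt (fun y : ℝ => (b-1)*(1-y)) (-(b-1)) x := by
      simpa using d1.const_mul (b-1)
    have d6 := d4.div d5 hux.ne'
    have dφ : HasDerivAt φ (b^2/((x-1)*((b-1)*x+1)^2)) x := by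
      refine (((d2.sub d3).neg).add (d6.add_const 1)).congr_deriv ?_
      have hx1 : x - 1 ≠ 0 := by linarith
      field_simp
      ring
    apply dφ.congr_of_eventuallyEq
    filter_upwards [isOpen_Ioo.mem_nhds hx] with y hy
    exact hB y hy
  refine ⟨?_, fun x hx => ⟨(hC x hx).deriv, ?_⟩⟩
  · apply strictConcaveOn_of_deriv2_neg (convex_Ioo 0 1)
    · intro x hx
      exact (hA x hx).continuousAt.continuousWithinAt
    · intro x hx
      rw [interior_Ioo] at hx
      have h1x : (0:ℝ) < 1 - x := by linarith [hx.2]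
      have hux := hu x hx
      have hval := (hC x hx).deriv
      have hneg : b ^ 2 / ((x - 1) * ((b - 1) * x + 1) ^ 2) < 0 :=
        div_neg_of_pos_of_neg (by positivity)
          (mul_neg_of_neg_of_pos (by linarith) (pow_pos hux 2))
      show deriv^[2] g x < 0
      simpa [Function.iterate_succ, Function.comp, hval] using hneg
  · have h1x : (0:ℝ) < 1 - x := by linarith [hx.2]
    have hux := hu x hx
    exact div_neg_of_pos_of_neg (by positivity)
      (mul_neg_of_neg_of_pos (by linarith) (pow_pos hux 2))
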